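/- For each eigenvalue of the Galerkin-projected matrix: under the hypotheses above (self-adjoint H bounded below with discrete lowest eigenvalues, orthonormal trial family of size N), each Ritz value satisfies Ẽₙ ≥ Eₙ for every n = 0,…,N−1. -/

import Mathlib

open scoped InnerProductSpace

theorem coercive_aux {𝓗 : Type*} [NormedAddCommGroup 𝓗] [InnerProductSpace ℝ 𝓗]
    (H : 𝓗 →ₗ[ℝ] 𝓗)
    (hsym : ∀ x y : 𝓗, ⟪H x, y⟫_ℝ = ⟪x, H y⟫_ℝ)
    (E : ℕ → ℝ) (hE : Monotone E)
    (hbelow : ∀ x : 𝓗, E 0 * ‖x‖ ^ 2 ≤ ⟪x, H x⟫_ℝ)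
    (e : ℕ → 𝓗) (he : Orthonormal ℝ e)
    (hcomplete : (Submodule.span ℝ (Set.range e)).topologicalClosure = ⊤)
    (heig : ∀ n, H (e n) = E n • e n)
    (n : ℕ) (x : 𝓗) (hx : ∀ k < n, ⟪e k, x⟫_ℝ = 0) :
    E n * ‖x‖ ^ 2 ≤ ⟪x, H x⟫_ℝ := by
  classical
  set c : ℕ → ℝ := fun k => ⟪e k, x⟫_ℝ with hc
  -- the main finite-dimensional estimate
  have main : ∀ m : ℕ, n ≤ m →
      (E 0 - E n) * ‖x - ∑ k ∈ Finset.range m, c k • e k‖ ^ 2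
        ≤ ⟪x, H x⟫_ℝ - E n * ‖x‖ ^ 2 := by
    intro m hm
    set P : 𝓗 := ∑ k ∈ Finset.range m, c k • e k with hP
    set y : 𝓗 := x - P with hy
    have hyP : ∀ j ∈ Finset.range m, ⟪e j, y⟫_ℝ = 0 := by
      intro j hj
      have h1 : ⟪e j, P⟫_ℝ = c j := he.inner_right_sum c hj
      simp [hy, inner_sub_right, h1]; exact sub_eq_zero.mpr rfl
    have hPy : ⟪P, y⟫_ℝ = 0 := by
      rw [hP, sum_inner]
      refine Finset.sum_eq_zero fun j hj => ?_
      rw [inner_smul_left]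
      simp [hyP j hj]
    have hHP : H P = ∑ k ∈ Finset.range m, (c k * E k) • e k := by
      rw [hP, map_sum]
      refine Finset.sum_congr rfl fun k _ => ?_
      rw [map_smul, heig k, smul_smul, mul_comm]
    have hyHP : ⟪y, H P⟫_ℝ = 0 := by
      rw [hHP, inner_sum]
      refine Finset.sum_eq_zero fun j hj => ?_
      rw [inner_smul_right]
      have := hyP j hj
      rw [real_inner_comm] at this
      simp [this]
    have hPHy : ⟪P, H y⟫_ℝ = 0 := by
      rw [← hsym, hHP, sum_inner]
      refine Finset.sum_eq_zero fun j hj => ?_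
      rw [inner_smul_left]
      simp [hyP j hj]
    have hPHP : ⟪P, H P⟫_ℝ = ∑ k ∈ Finset.range m, E k * c k ^ 2 := by
      rw [hHP, hP, he.inner_sum]
      refine Finset.sum_congr rfl fun k _ => ?_
      simp [pow_two]; ring
    have hxsplit : x = y + P := by rw [hy]; abel
    have hinner : ⟪x, H x⟫_ℝ = ⟪y, H y⟫_ℝ + ∑ k ∈ Finset.range m, E k * c k ^ 2 := by
      rw [hxsplit]
      rw [map_add, inner_add_left, inner_add_right, inner_add_right, hyHP, hPHy, hPHP]
      ring
    have hnorm : ‖x‖ ^ 2 = ‖y‖ ^ 2 + ∑ k ∈ Finset.range m, c k ^ 2 := by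
      have hPP : ⟪P, P⟫_ℝ = ∑ k ∈ Finset.range m, c k ^ 2 := by
        rw [hP, he.inner_sum]
        refine Finset.sum_congr rfl fun k _ => ?_
        simp [pow_two]
      have hyP' : ⟪y, P⟫_ℝ = 0 := by rw [real_inner_comm]; exact hPy
      have hP2 : ‖P‖ ^ 2 = ∑ k ∈ Finset.range m, c k ^ 2 := by
        rw [← real_inner_self_eq_norm_sq, hPP]
      rw [hxsplit, norm_add_sq_real, hyP', hP2]; ring
    have hterm : E n * ∑ k ∈ Finset.range m, c k ^ 2
        ≤ ∑ k ∈ Finset.range m, E k * c k ^ 2 := by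
      rw [Finset.mul_sum]
      refine Finset.sum_le_sum fun k _ => ?_
      rcases lt_or_ge k n with hk | hk
      · simp only [hc]
        simp [hx k hk]
      · have := hE hk
        nlinarith [sq_nonneg (c k)]
    have hbel := hbelow y
    rw [hinner, hnorm]
    nlinarith [hterm, hbel]
  -- density: the tails go to zero
  have happrox : ∀ ε : ℝ, 0 < ε → ∃ m : ℕ, n ≤ m ∧
      ‖x - ∑ k ∈ Finset.range m, c k • e k‖ ≤ ε := by
    intro ε hε
    have hxmem : x ∈ closure ((Submodule.span ℝ (Set.range e) : Set 𝓗)) := by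
      have : x ∈ ((Submodule.span ℝ (Set.range e)).topologicalClosure : Set 𝓗) := by
        rw [hcomplete]; trivial
      simpa [Submodule.topologicalClosure_coe] using this
    rw [Metric.mem_closure_iff] at hxmem
    obtain ⟨z, hz, hdz⟩ := hxmem ε hε
    rw [SetLike.mem_coe, Finsupp.mem_span_range_iff_exists_finsupp] at hz
    obtain ⟨d, hd⟩ := hz
    set m : ℕ := max n (if h : d.support.Nonempty then d.support.max' h + 1 else 0) with hm
    refine ⟨m, le_max_left _ _, ?_⟩
    have hsupp : d.support ⊆ Finset.range m := by
      intro k hk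
      have hne : d.support.Nonempty := ⟨k, hk⟩
      have : k ≤ d.support.max' hne := Finset.le_max' _ _ hk
      simp only [Finset.mem_range, hm]
      have : k < (if h : d.support.Nonempty then d.support.max' h + 1 else 0) := by
        rw [dif_pos hne]; omega
      exact lt_of_lt_of_le this (le_max_right _ _)
    have hzsum : z = ∑ k ∈ Finset.range m, d k • e k := by
      rw [← hd, Finsupp.sum]
      exact Finset.sum_subset hsupp (fun k _ hk => by
        rw [Finsupp.notMem_support_iff.mp hk, zero_smul])
    -- best approximation
    set P : 𝓗 := ∑ k ∈ Finset.range m, c k • e k with hP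
    have hperp : ⟪x - P, P - z⟫_ℝ = 0 := by
      have hyP : ∀ j ∈ Finset.range m, ⟪e j, x - P⟫_ℝ = 0 := by
        intro j hj
        have h1 : ⟪e j, P⟫_ℝ = c j := he.inner_right_sum c hj
        simp [inner_sub_right, h1]; exact sub_eq_zero.mpr rfl
      have hPz : P - z = ∑ k ∈ Finset.range m, (c k - d k) • e k := by
        rw [hzsum, hP, ← Finset.sum_sub_distrib]
        exact Finset.sum_congr rfl fun k _ => (sub_smul _ _ _).symm
      rw [hPz, real_inner_comm, sum_inner]
      refine Finset.sum_eq_zero fun j hj => ?_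
      rw [inner_smul_left]
      simp [hyP j hj]
    have hle : ‖x - P‖ ^ 2 ≤ ‖x - z‖ ^ 2 := by
      have : x - z = (x - P) + (P - z) := by abel
      rw [this, norm_add_sq_real, hperp]
      nlinarith [sq_nonneg ‖P - z‖]
    have h1 : ‖x - P‖ ≤ ‖x - z‖ := by
      nlinarith [norm_nonneg (x - P), norm_nonneg (x - z)]
    have h2 : ‖x - z‖ ≤ ε := by
      rw [dist_eq_norm] at hdz; linarith
    exact h1.trans h2
  -- conclude
  by_contra hcon
  push_neg at hcon
  set D : ℝ := ⟪x, H x⟫_ℝ - E n * ‖x‖ ^ 2 with hD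
  have hDneg : D < 0 := by rw [hD]; linarith
  set C : ℝ := E n - E 0 + 1 with hC
  have hC0 : 0 < C := by
    have := hE (Nat.zero_le n); rw [hC]; linarith
  set ε : ℝ := min 1 (-D / (2 * C)) with hε
  have hεpos : 0 < ε := by
    apply lt_min one_pos
    apply div_pos (by linarith) (by linarith)
  obtain ⟨m, hmn, hmε⟩ := happrox ε hεpos
  have hmain := main m hmn
  set t : ℝ := ‖x - ∑ k ∈ Finset.range m, c k • e k‖ with ht
  have ht0 : 0 ≤ t := norm_nonneg _
  have hE0n : E 0 ≤ E n := hE (Nat.zero_le n)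
  have h1 : (E 0 - E n) * ε ^ 2 ≤ (E 0 - E n) * t ^ 2 := by
    apply mul_le_mul_of_nonpos_left _ (by linarith)
    nlinarith
  have hεle1 : ε ≤ 1 := min_le_left _ _
  have hεle : ε ≤ -D / (2 * C) := min_le_right _ _
  have hsq : ε ^ 2 ≤ ε := by nlinarith
  have h2 : (E 0 - E n) * ε ^ 2 ≥ -C * ε := by nlinarith
  have h3 : -C * ε ≥ D / 2 := by
    have : ε * (2 * C) ≤ -D := by
      exact (le_div_iff₀ (by linarith)).mp hεle
    linarith
  nlinarith [h1, h2, h3, hmain, hDneg]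

private lemma inner_sum_sum {𝓗 : Type*} [NormedAddCommGroup 𝓗] [InnerProductSpace ℝ 𝓗]
    {ι₁ ι₂ : Type*} [Fintype ι₁] [Fintype ι₂] (u : ι₁ → ℝ) (v : ι₂ → ℝ)
    (f : ι₁ → 𝓗) (g : ι₂ → 𝓗) :
    ⟪∑ k, u k • f k, ∑ j, v j • g j⟫_ℝ = ∑ k, ∑ j, u k * v j * ⟪f k, g j⟫_ℝ := by
  rw [sum_inner]
  refine Finset.sum_congr rfl fun k _ => ?_
  rw [inner_smul_left, inner_sum, Finset.mul_sum]
  refine Finset.sum_congr rfl fun j _ => ?_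
  rw [inner_smul_right, starRingEnd_apply, star_trivial]
  ring

/-- Cauchy interlacing / min–max bound for Ritz values. With `H`
symmetric (self-adjoint), bounded below, with complete orthonormal eigenvectors
`e n` and sorted eigenvalues `E n`, and `ψ` an orthonormal family of size `N`,
each sorted eigenvalue `Ẽₙ` of the Galerkin matrix `⟨ψᵢ, H ψⱼ⟩` satisfies
`Ẽₙ ≥ Eₙ` for every `n = 0,…,N−1`. -/
theorem ritz_values_bound
    {𝓗 : Type*} [NormedAddCommGroup 𝓗] [InnerProductSpace ℝ 𝓗]
    (H : 𝓗 →ₗ[ℝ] 𝓗)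
    (hsym : ∀ x y : 𝓗, ⟪H x, y⟫_ℝ = ⟪x, H y⟫_ℝ)
    (E : ℕ → ℝ) (hE : Monotone E)
    (hbelow : ∀ x : 𝓗, E 0 * ‖x‖ ^ 2 ≤ ⟪x, H x⟫_ℝ)
    (e : ℕ → 𝓗) (he : Orthonormal ℝ e)
    (hcomplete : (Submodule.span ℝ (Set.range e)).topologicalClosure = ⊤)
    (heig : ∀ n, H (e n) = E n • e n)
    (N : ℕ) (ψ : Fin N → 𝓗) (hψ : Orthonormal ℝ ψ)
    (M : Matrix (Fin N) (Fin N) ℝ)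
    (hM : ∀ i j, M i j = ⟪ψ i, H (ψ j)⟫_ℝ)
    (hHerm : M.IsHermitian)
    (Etil : Fin N → ℝ) (hEtil : Monotone Etil)
    (hspec : ∃ σ : Equiv.Perm (Fin N), ∀ i, Etil i = hHerm.eigenvalues (σ i)) :
    ∀ n : Fin N, E n ≤ Etil n := by
  classical
  intro n
  obtain ⟨σ, hσ⟩ := hspec
  have hNn : (n : ℕ) + 1 ≤ N := n.isLt
  set B := hHerm.eigenvectorBasis with hB
  set ι : Fin ((n : ℕ) + 1) → Fin N := fun i => σ (Fin.castLE hNn i) with hι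
  have hιinj : Function.Injective ι := by
    intro i j h
    rw [hι] at h
    exact Fin.castLE_injective hNn (σ.injective h)
  set w : Fin ((n : ℕ) + 1) → 𝓗 := fun i => ∑ j, (B (ι i)) j • ψ j with hw
  have hBdot : ∀ k k' : Fin N, ∑ j, (B k) j * (B k') j = if k = k' then 1 else 0 := by
    intro k k'
    have h2 : ⟪B k, B k'⟫_ℝ = ∑ j, (B k) j * (B k') j := by
      rw [PiLp.inner_apply]; simp; exact Finset.sum_congr rfl fun _ _ => mul_comm _ _
    rw [← h2, orthonormal_iff_ite.mp B.orthonormal]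
  have hww : ∀ i i', ⟪w i, w i'⟫_ℝ = if i = i' then 1 else 0 := by
    intro i i'
    have h1 : ⟪w i, w i'⟫_ℝ = ∑ j, (B (ι i)) j * (B (ι i')) j := by
      rw [hw]
      simpa using hψ.inner_sum (fun j => (B (ι i)) j) (fun j => (B (ι i')) j) Finset.univ
    rw [h1, hBdot]
    simp [hιinj.eq_iff]
  have hwon : Orthonormal ℝ w := orthonormal_iff_ite.mpr hww
  have hwH : ∀ i i', ⟪w i, H (w i')⟫_ℝ
      = (if i = i' then hHerm.eigenvalues (ι i') else 0) := by
    intro i i'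
    have hHw : H (w i') = ∑ j, (B (ι i')) j • H (ψ j) := by
      rw [hw]
      simp [map_sum, map_smul]
    calc ⟪w i, H (w i')⟫_ℝ
        = ∑ k, ∑ j, (B (ι i)) k * (B (ι i')) j * ⟪ψ k, H (ψ j)⟫_ℝ := by
          rw [hw, hHw]
          exact inner_sum_sum _ _ _ _
      _ = ∑ k, (B (ι i)) k * (M.mulVec ⇑(B (ι i'))) k := by
          refine Finset.sum_congr rfl fun k _ => ?_
          rw [Matrix.mulVec, dotProduct, Finset.mul_sum]
          refine Finset.sum_congr rfl fun j _ => ?_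
          rw [hM]
          ring
      _ = hHerm.eigenvalues (ι i') * ∑ k, (B (ι i)) k * (B (ι i')) k := by
          rw [hB, Matrix.IsHermitian.mulVec_eigenvectorBasis, Finset.mul_sum]
          refine Finset.sum_congr rfl fun k _ => ?_
          simp only [Pi.smul_apply, smul_eq_mul]
          ring
      _ = if i = i' then hHerm.eigenvalues (ι i') else 0 := by
          rw [hBdot]
          simp [hιinj.eq_iff]
  -- a nonzero vector in the kernel of the constraint map
  let L : (Fin ((n : ℕ) + 1) → ℝ) →ₗ[ℝ] (Fin (n : ℕ) → ℝ) :=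
    { toFun := fun a k => ⟪e (k : ℕ), ∑ i, a i • w i⟫_ℝ
      map_add' := by
        intro a b; funext k
        simp [add_smul, Finset.sum_add_distrib, inner_add_right]
      map_smul' := by
        intro r a; funext k
        simp [mul_smul, ← Finset.smul_sum, inner_smul_right] }
  have hL : ∃ a : Fin ((n : ℕ) + 1) → ℝ, a ≠ 0 ∧ L a = 0 := by
    by_contra hcon
    push_neg at hcon
    have hinj : Function.Injective L := by
      rw [← LinearMap.ker_eq_bot, Submodule.eq_bot_iff]
      intro a ha
      by_contra ha0
      exact hcon a ha0 (LinearMap.mem_ker.mp ha)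
    have hle := LinearMap.finrank_le_finrank_of_injective hinj
    simp [Module.finrank_fintype_fun_eq_card] at hle
  obtain ⟨a, ha0, haL⟩ := hL
  set x : 𝓗 := ∑ i, a i • w i with hxdef
  have hxperp : ∀ k, k < (n : ℕ) → ⟪e k, x⟫_ℝ = 0 := by
    intro k hk
    have := congrFun haL ⟨k, hk⟩
    simpa [L] using this
  have hnormx : ‖x‖ ^ 2 = ∑ i, a i ^ 2 := by
    rw [← real_inner_self_eq_norm_sq, hxdef]
    have := hwon.inner_sum a a Finset.univ
    rw [this]
    refine Finset.sum_congr rfl fun i _ => ?_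
    simp [starRingEnd_apply, pow_two]
  have hxHx : ⟪x, H x⟫_ℝ = ∑ i, a i ^ 2 * hHerm.eigenvalues (ι i) := by
    have hHx : H x = ∑ i', a i' • H (w i') := by
      rw [hxdef]
      simp [map_sum, map_smul]
    calc ⟪x, H x⟫_ℝ = ∑ i, ∑ i', (a i * a i') * ⟪w i, H (w i')⟫_ℝ := by
          rw [hxdef, hHx]
          exact inner_sum_sum _ _ _ _
      _ = ∑ i, a i ^ 2 * hHerm.eigenvalues (ι i) := by
          refine Finset.sum_congr rfl fun i _ => ?_
          rw [Finset.sum_eq_single i]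
          · rw [hwH, if_pos rfl]; ring
          · intro b _ hb
            rw [hwH, if_neg (Ne.symm hb), mul_zero]
          · intro h
            exact absurd (Finset.mem_univ i) h
  have heigle : ∀ i : Fin ((n : ℕ) + 1), hHerm.eigenvalues (ι i) ≤ Etil n := by
    intro i
    have h1 : Etil (Fin.castLE hNn i) = hHerm.eigenvalues (ι i) := hσ _
    rw [← h1]
    apply hEtil
    rw [Fin.le_def]
    simpa using Fin.is_le i
  have hsumpos : 0 < ∑ i, a i ^ 2 := by
    obtain ⟨i, hi⟩ := Function.ne_iff.mp ha0
    refine Finset.sum_pos' (fun j _ => sq_nonneg _) ⟨i, Finset.mem_univ i, ?_⟩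
    exact pow_two_pos_of_ne_zero hi
  have hup : ⟪x, H x⟫_ℝ ≤ Etil n * ∑ i, a i ^ 2 := by
    rw [hxHx, Finset.mul_sum]
    refine Finset.sum_le_sum fun i _ => ?_
    have := heigle i
    nlinarith [sq_nonneg (a i)]
  have hlow := coercive_aux H hsym E hE hbelow e he hcomplete heig (n : ℕ) x hxperp
  rw [hnormx] at hlow
  have : E (n : ℕ) * (∑ i, a i ^ 2) ≤ Etil n * ∑ i, a i ^ 2 := le_trans hlow hup
  exact le_of_mul_le_mul_right (by linarith) hsumpos
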